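/- A homogeneous relation H on X is the standard homogeneous relation of some tournament if and only if H is tournamental, i.e. every element has congruence at most 2 and for every 3-element subset {a,b,c}, the induced relation H[{a,b,c}] has exactly 1 or 3 elements of congruence 2. -/
import Mathlib


/-- `H` is a homogeneous relation: for each `x`, the binary relation
`H x · ·` is an equivalence relation on the elements distinct from `x`. -/
def IsHomRel {X : Type*} (H : X → X → X → Prop) : Prop :=
  (∀ x y, y ≠ x → H x y y) ∧
  (∀ x y z, y ≠ x → z ≠ x → H x y z → H x z y) ∧
  (∀ x y z w, y ≠ x → z ≠ x → w ≠ x → H x y z → H x z w → H x y w)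

/-- `M` is a homogeneous module of `H`. -/
def IsModule {X : Type*} (H : X → X → X → Prop) (M : Set X) : Prop :=
  ∀ m ∈ M, ∀ m' ∈ M, ∀ x ∉ M, H x m m'

/-- Two sets overlap. -/
def Overlap {X : Type*} (A B : Set X) : Prop :=
  (A ∩ B).Nonempty ∧ (A \ B).Nonempty ∧ (B \ A).Nonempty

/-- `H` is tournamental: local congruence at most 2, and on every triple of
distinct elements exactly 1 or 3 elements have congruence 2 (an element `a`
has congruence 2 in `H[{a,b,c}]` iff `¬ H a b c`). -/
def Tournamental {X : Type*} (H : X → X → X → Prop) : Prop :=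
  (∀ x a b c : X, a ≠ x → b ≠ x → c ≠ x → H x a b ∨ H x a c ∨ H x b c) ∧
  (∀ a b c : X, a ≠ b → a ≠ c → b ≠ c →
    ((¬ H a b c ∧ ¬ H b a c ∧ ¬ H c a b) ∨
     (H a b c ∧ H b a c ∧ ¬ H c a b) ∨
     (H a b c ∧ ¬ H b a c ∧ H c a b) ∨
     (¬ H a b c ∧ H b a c ∧ H c a b)))

/- Auxiliary propositional lemmas. -/

set_option maxHeartbeats 1000000 in
lemma aux_fwd2 (Gab Gac Gbc Gba Gca Gcb : Prop)
    (h1 : Gab ↔ ¬ Gba) (h2 : Gac ↔ ¬ Gca) (h3 : Gbc ↔ ¬ Gcb) :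
    ((¬(Gab ↔ Gac) ∧ ¬(Gba ↔ Gbc) ∧ ¬(Gca ↔ Gcb)) ∨
     ((Gab ↔ Gac) ∧ (Gba ↔ Gbc) ∧ ¬(Gca ↔ Gcb)) ∨
     ((Gab ↔ Gac) ∧ (¬(Gba ↔ Gbc)) ∧ (Gca ↔ Gcb)) ∨
     (¬(Gab ↔ Gac) ∧ (Gba ↔ Gbc) ∧ (Gca ↔ Gcb))) := by
  by_cases xa : Gab <;> by_cases xb : Gac <;> by_cases xc : Gbc <;> tauto

/-- Propositional triangle lemma: the parity condition on a triple forces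
consistency of the "disagreement" relation. -/
lemma aux_tri (ab ba ae ea be eb : Prop)
    (h : (¬(ab ↔ ae) ∧ ¬(ba ↔ be) ∧ ¬(ea ↔ eb)) ∨
         ((ab ↔ ae) ∧ (ba ↔ be) ∧ ¬(ea ↔ eb)) ∨
         ((ab ↔ ae) ∧ ¬(ba ↔ be) ∧ (ea ↔ eb)) ∨
         (¬(ab ↔ ae) ∧ (ba ↔ be) ∧ (ea ↔ eb))) :
    ((¬(ab ↔ ba) ↔ ¬(ae ↔ ea)) ↔ ¬(be ↔ eb)) := by
  itauto!

lemma aux_cong (A B C : Prop) : (A ↔ B) ∨ (A ↔ C) ∨ (B ↔ C) := by tauto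

lemma aux_p1 (q s A B : Prop) (hq : q) (hs : ¬ s) :
    ((q ∨ A) ↔ (s ∨ B)) ↔ B := by tauto

lemma aux_p2 (q s A x y : Prop) (hq : q) (hs : ¬ s) :
    ((s ∨ ¬(y ↔ x)) ↔ (q ∨ A)) ↔ ¬(x ↔ y) := by tauto

lemma aux_p3 (q s A B C : Prop) (hq : ¬ q) (hs : ¬ s) (h : (A ↔ B) ↔ C) :
    ((q ∨ A) ↔ (s ∨ B)) ↔ C := by tauto

set_option maxHeartbeats 1000000 in
lemma aux_asym (Eu Ev cuv cvu P Q : Prop) (hP : P) (hQ : Q)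
    (h : (Eu ↔ Ev) ↔ ¬(cuv ↔ cvu)) :
    ((P ∧ (Eu ↔ cuv)) ↔ ¬(Q ∧ (Ev ↔ cvu))) := by
  by_cases x1 : Eu <;> by_cases x2 : Ev <;> by_cases x3 : cuv <;> tauto

set_option maxHeartbeats 1000000 in
lemma aux_third (E c1 c2 P Q : Prop) (hP : P) (hQ : Q) :
    ((c1 ↔ c2) ↔ ((P ∧ (E ↔ c1)) ↔ (Q ∧ (E ↔ c2)))) := by
  by_cases x1 : E <;> by_cases x2 : c1 <;> by_cases x3 : c2 <;> tauto

theorem stmt_15 {X : Type*} [Fintype X] (H : X → X → X → Prop)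
    (hH : IsHomRel H) :
    (∃ G : X → X → Prop, (∀ u : X, ¬ G u u) ∧
        (∀ u v : X, u ≠ v → (G u v ↔ ¬ G v u)) ∧
        ∀ x u v : X, u ≠ x → v ≠ x → (H x u v ↔ (G x u ↔ G x v))) ↔
      Tournamental H := by
  obtain ⟨hrefl, hsymm, htrans⟩ := hH
  constructor
  · rintro ⟨G, hGirr, hGasym, hGH⟩
    constructor
    · intro x a b c ha hb hc
      rw [hGH x a b ha hb, hGH x a c ha hc, hGH x b c hb hc]
      exact aux_cong _ _ _
    · intro a b c hab hac hbc
      rw [hGH a b c (Ne.symm hab) (Ne.symm hac), hGH b a c hab (Ne.symm hbc),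
        hGH c a b hac hbc]
      exact aux_fwd2 _ _ _ _ _ _ (hGasym a b hab) (hGasym a c hac) (hGasym b c hbc)
  · rintro ⟨hT1, hT2⟩
    by_cases hX : ∃ p q : X, p ≠ q
    · obtain ⟨p, q, hpq⟩ := hX
      have hr : ∀ x : X, ∃ y : X, y ≠ x := by
        intro x
        rcases Classical.em (x = p) with h | h
        · exact ⟨q, h ▸ hpq.symm⟩
        · exact ⟨p, fun e => h e.symm⟩
      choose r hrne using hr
      -- `H x u (r x)` is the "colouring" of the two classes at `x`
      have keyA : ∀ x u v : X, u ≠ x → v ≠ x →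
          (H x u v ↔ (H x u (r x) ↔ H x v (r x))) := by
        intro x u v hu hv
        constructor
        · intro huv
          constructor
          · intro hur
            exact htrans x v u (r x) hv hu (hrne x) (hsymm x u v hu hv huv) hur
          · intro hvr
            exact htrans x u v (r x) hu hv (hrne x) huv hvr
        · intro hiff
          rcases Classical.em (H x u (r x)) with h | h
          · exact htrans x u (r x) v hu (hrne x) hv h
              (hsymm x v (r x) hv (hrne x) (hiff.mp h))
          · rcases hT1 x u v (r x) hu hv (hrne x) with h1 | h2 | h3
            · exact h1
            · exact absurd h2 h
            · exact absurd (hiff.mpr h3) h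
      -- triangle consistency of the disagreement relation
      have hDtri : ∀ a b e : X, a ≠ b → a ≠ e → b ≠ e →
          ((¬(H a b (r a) ↔ H b a (r b)) ↔ ¬(H a e (r a) ↔ H e a (r e))) ↔
            ¬(H b e (r b) ↔ H e b (r e))) := by
        intro a b e hab hae hbe
        have h4 := hT2 a b e hab hae hbe
        rw [keyA a b e hab.symm hae.symm, keyA b a e hab hbe.symm,
          keyA e a b hae hbe] at h4
        exact aux_tri _ _ _ _ _ _ h4
      refine ⟨fun x u => u ≠ x ∧
        ((x = p ∨ ¬(H p x (r p) ↔ H x p (r x))) ↔ H x u (r x)), ?_, ?_, ?_⟩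
      · intro u h
        exact h.1 rfl
      · intro u v huv
        have hvu : v ≠ u := Ne.symm huv
        have hpair : ((u = p ∨ ¬(H p u (r p) ↔ H u p (r u))) ↔
            (v = p ∨ ¬(H p v (r p) ↔ H v p (r v)))) ↔
            ¬(H u v (r u) ↔ H v u (r v)) := by
          rcases Classical.em (u = p) with hu | hu
          · subst hu
            exact aux_p1 _ _ _ _ rfl (fun e => huv e.symm)
          · rcases Classical.em (v = p) with hv | hv
            · subst hv
              exact aux_p2 _ _ _ _ _ rfl hu
            · exact aux_p3 _ _ _ _ _ hu hv
                (hDtri p u v (fun e => hu e.symm) (fun e => hv e.symm) huv)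
        exact aux_asym _ _ _ _ _ _ hvu huv hpair
      · intro x u v hu hv
        rw [keyA x u v hu hv]
        exact aux_third _ _ _ _ _ hu hv
    · push_neg at hX
      exact ⟨fun _ _ => False, fun u h => h, fun u v huv => absurd (hX u v) huv,
        fun x u v hu hv => absurd (hX u x) hu⟩
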